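/- (Proposition 4, one-sided variation) Let r > 0 and let P be the Half-Gaussian probability density P(ψ) = (2/(π·r))·exp(−ψ²/(π·r²)) for ψ ≥ 0 and P(ψ) = 0 otherwise (so the mean is μ = r). Then for every c_e ≥ 0, the one-sided energy variation satisfies E_var(c_e) = (g_e²/2)·[(2·c_e² + π)·(1 − erf(c_e/√π)) − 2·c_e·exp(−c_e²/π)]·r², where erf(x) = (2/√π)·∫₀^x exp(−t²) dt. -/

import Mathlib

open MeasureTheory Set Real

section aux
open Filter

-- integrability
lemma gInt0 {b : ℝ} (hb : 0 < b) : Integrable (fun x : ℝ => Real.exp (-b * x ^ 2)) :=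
  integrable_exp_neg_mul_sq hb

lemma gInt1 {b : ℝ} (hb : 0 < b) : Integrable (fun x : ℝ => x * Real.exp (-b * x ^ 2)) := by
  simpa [Real.rpow_one] using integrable_rpow_mul_exp_neg_mul_sq hb (by norm_num : (-1:ℝ) < 1)

lemma gInt2 {b : ℝ} (hb : 0 < b) : Integrable (fun x : ℝ => x ^ 2 * Real.exp (-b * x ^ 2)) := by
  simpa [Real.rpow_two] using integrable_rpow_mul_exp_neg_mul_sq hb (by norm_num : (-1:ℝ) < 2)

lemma gTend0 {b : ℝ} (hb : 0 < b) :
    Tendsto (fun x : ℝ => Real.exp (-b * x ^ 2)) atTop (nhds 0) := by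
  apply Real.tendsto_exp_atBot.comp
  have h : Tendsto (fun x : ℝ => b * x ^ 2) atTop atTop :=
    (tendsto_pow_atTop (two_ne_zero)).const_mul_atTop hb
  simpa [Function.comp_def, neg_mul] using tendsto_neg_atTop_atBot.comp h

lemma gTend1 {b : ℝ} (hb : 0 < b) :
    Tendsto (fun x : ℝ => x * Real.exp (-b * x ^ 2)) atTop (nhds 0) := by
  have h := rpow_mul_exp_neg_mul_sq_isLittleO_exp_neg hb 1
  have h2 : Tendsto (fun x : ℝ => Real.exp (-(1/2) * x)) atTop (nhds 0) := by
    apply Real.tendsto_exp_atBot.comp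
    exact tendsto_id.const_mul_atTop_of_neg (by norm_num : (-(1/2) : ℝ) < 0)
  simpa [Real.rpow_one] using h.tendsto_zero_of_tendsto h2

lemma gauss_I1 {b : ℝ} (hb : 0 < b) (a : ℝ) :
    ∫ x in Ioi a, x * Real.exp (-b * x ^ 2) = Real.exp (-b * a ^ 2) / (2 * b) := by
  have hderiv : ∀ x ∈ Ioi a, HasDerivAt (fun x : ℝ => -Real.exp (-b * x ^ 2) / (2 * b))
      (x * Real.exp (-b * x ^ 2)) x := by
    intro x _
    have h1 : HasDerivAt (fun x : ℝ => -b * x ^ 2) (-b * (2 * x)) x := by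
      simpa using ((hasDerivAt_pow 2 x).const_mul (-b))
    have h2 := (h1.exp.neg).div_const (2 * b)
    refine h2.congr_deriv ?_
    rw [div_eq_iff (by positivity)]
    ring
  have hcont : ContinuousWithinAt (fun x : ℝ => -Real.exp (-b * x ^ 2) / (2 * b)) (Ici a) a := by
    have hc : Continuous fun x : ℝ => -b * x ^ 2 := by continuity
    exact (((Real.continuous_exp.comp hc).neg).div_const _).continuousWithinAt
  have htend : Tendsto (fun x : ℝ => -Real.exp (-b * x ^ 2) / (2 * b)) atTop (nhds 0) := by
    simpa using ((gTend0 hb).neg).div_const (2 * b)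
  have := integral_Ioi_of_hasDerivAt_of_tendsto hcont hderiv ((gInt1 hb).integrableOn) htend
  rw [this]
  ring

lemma gauss_I2 {b : ℝ} (hb : 0 < b) (a : ℝ) :
    ∫ x in Ioi a, x ^ 2 * Real.exp (-b * x ^ 2)
      = a * Real.exp (-b * a ^ 2) / (2 * b) + (∫ x in Ioi a, Real.exp (-b * x ^ 2)) / (2 * b) := by
  have hderiv : ∀ x ∈ Ioi a, HasDerivAt (fun x : ℝ => -(x * Real.exp (-b * x ^ 2)) / (2 * b))
      (x ^ 2 * Real.exp (-b * x ^ 2) - Real.exp (-b * x ^ 2) / (2 * b)) x := by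
    intro x _
    have h1 : HasDerivAt (fun x : ℝ => -b * x ^ 2) (-b * (2 * x)) x := by
      simpa using ((hasDerivAt_pow 2 x).const_mul (-b))
    have h2 := (((hasDerivAt_id x).mul h1.exp).neg).div_const (2 * b)
    refine h2.congr_deriv ?_
    have hb2 : (2 * b) ≠ 0 := by positivity
    rw [div_eq_iff hb2, sub_mul, div_mul_cancel₀ _ hb2]
    simp only [id]
    ring
  have hcont : ContinuousWithinAt (fun x : ℝ => -(x * Real.exp (-b * x ^ 2)) / (2 * b)) (Ici a) a := by
    have hc : Continuous fun x : ℝ => -b * x ^ 2 := by continuity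
    exact (((continuous_id.mul (Real.continuous_exp.comp hc)).neg).div_const _).continuousWithinAt
  have htend : Tendsto (fun x : ℝ => -(x * Real.exp (-b * x ^ 2)) / (2 * b)) atTop (nhds 0) := by
    simpa using ((gTend1 hb).neg).div_const (2 * b)
  have hint : IntegrableOn
      (fun x : ℝ => x ^ 2 * Real.exp (-b * x ^ 2) - Real.exp (-b * x ^ 2) / (2 * b)) (Ioi a) :=
    ((gInt2 hb).sub ((gInt0 hb).div_const (2 * b))).integrableOn
  have key := integral_Ioi_of_hasDerivAt_of_tendsto hcont hderiv hint htend
  rw [integral_sub ((gInt2 hb).integrableOn) (((gInt0 hb).div_const (2*b)).integrableOn)] at key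
  rw [integral_div] at key
  have : ∫ x in Ioi a, x ^ 2 * Real.exp (-b * x ^ 2)
      = (0 - -(a * Real.exp (-b * a ^ 2)) / (2 * b)) + (∫ x in Ioi a, Real.exp (-b * x ^ 2)) / (2 * b) := by
    linarith [key]
  rw [this]; ring

lemma gauss_I0 {b : ℝ} (hb : 0 < b) {a : ℝ} (ha : 0 ≤ a) :
    ∫ x in Ioi a, Real.exp (-b * x ^ 2)
      = Real.sqrt (π / b) / 2 - ∫ x in (0:ℝ)..a, Real.exp (-b * x ^ 2) := by
  have hsplit : Ioc 0 a ∪ Ioi a = Ioi (0:ℝ) := Ioc_union_Ioi_eq_Ioi ha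
  have h := setIntegral_union (f := fun x : ℝ => Real.exp (-b * x ^ 2)) (μ := volume)
    (s := Ioc 0 a) (t := Ioi a) (Ioc_disjoint_Ioi le_rfl) measurableSet_Ioi
    ((gInt0 hb).integrableOn) ((gInt0 hb).integrableOn)
  rw [hsplit, integral_gaussian_Ioi] at h
  rw [intervalIntegral.integral_of_le ha]
  linarith [h]

lemma cov_lemma (r c : ℝ) (hr : 0 < r) :
    ∫ x in (0:ℝ)..(c*r), Real.exp (-(π * r ^ 2)⁻¹ * x ^ 2)
      = (Real.sqrt π * r) * ∫ t in (0:ℝ)..(c / Real.sqrt π), Real.exp (-t ^ 2) := by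
  have hs : (0:ℝ) < Real.sqrt π := Real.sqrt_pos.mpr Real.pi_pos
  have hsr : Real.sqrt π * r ≠ 0 := by positivity
  have h := intervalIntegral.integral_comp_div (a := (0:ℝ)) (b := c*r)
    (f := fun t : ℝ => Real.exp (-t ^ 2)) hsr
  have h1 : ∀ x : ℝ, Real.exp (-(x / (Real.sqrt π * r)) ^ 2)
      = Real.exp (-(π * r ^ 2)⁻¹ * x ^ 2) := by
    intro x
    congr 1
    rw [div_pow, mul_pow, Real.sq_sqrt Real.pi_pos.le]
    field_simp
  simp only [h1] at h
  rw [h, zero_div, smul_eq_mul]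
  congr 2
  rw [mul_comm (Real.sqrt π) r, ← div_div, mul_div_assoc, div_self hr.ne', mul_one]

end aux

/-- One-sided energy variation `E_var(c) = g_e²·∫_{c·μ}^∞ (ψ − c·μ)² P(ψ) dψ`. -/
noncomputable def Evar (P : ℝ → ℝ) (g_e μ c : ℝ) : ℝ :=
  g_e ^ 2 * ∫ ψ in Ioi (c * μ), (ψ - c * μ) ^ 2 * P ψ

/-- The error function `erf(x) = (2/√π)·∫₀^x exp(−t²) dt`. -/
noncomputable def erf (x : ℝ) : ℝ :=
  (2 / Real.sqrt π) * ∫ t in (0:ℝ)..x, Real.exp (-t ^ 2)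

/-- The Half-Gaussian density with mean `r`:
`P(ψ) = (2/(π·r))·exp(−ψ²/(π·r²))` for `ψ ≥ 0`, `0` otherwise. -/
noncomputable def halfGaussianPDF (r : ℝ) : ℝ → ℝ :=
  fun ψ => if 0 ≤ ψ then (2 / (π * r)) * Real.exp (-ψ ^ 2 / (π * r ^ 2)) else 0

/-- (Proposition 4, one-sided variation) For the Half-Gaussian density with mean `μ = r`,
for every `c_e ≥ 0`,
`E_var(c_e) = (g_e²/2)·[(2·c_e² + π)·(1 − erf(c_e/√π)) − 2·c_e·exp(−c_e²/π)]·r²`. -/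
theorem stmt_17 (r g_e : ℝ) (hr : 0 < r) (hg : 0 < g_e) :
    ∀ c_e : ℝ, 0 ≤ c_e →
      Evar (halfGaussianPDF r) g_e r c_e
        = (g_e ^ 2 / 2) * ((2 * c_e ^ 2 + π) * (1 - erf (c_e / Real.sqrt π))
            - 2 * c_e * Real.exp (-c_e ^ 2 / π)) * r ^ 2 := by
  intro c_e hc
  have hπ := Real.pi_pos
  set b : ℝ := (π * r ^ 2)⁻¹ with hbdef
  have hb : 0 < b := by positivity
  set a : ℝ := c_e * r with hadef
  have ha : 0 ≤ a := mul_nonneg hc hr.le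
  set T : ℝ := ∫ t in (0:ℝ)..(c_e / Real.sqrt π), Real.exp (-t ^ 2) with hT
  set J0 : ℝ := ∫ x in Ioi a, Real.exp (-b * x ^ 2) with hJ0
  set E : ℝ := Real.exp (-b * a ^ 2) with hE
  -- step 1: rewrite the PDF on Ioi a
  have hcong : ∫ ψ in Ioi a, (ψ - a) ^ 2 * halfGaussianPDF r ψ
      = ∫ ψ in Ioi a, ((2 / (π * r)) * (ψ ^ 2 * Real.exp (-b * ψ ^ 2))
          - (2 / (π * r) * (2 * a)) * (ψ * Real.exp (-b * ψ ^ 2))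
          + (2 / (π * r) * a ^ 2) * Real.exp (-b * ψ ^ 2)) := by
    apply setIntegral_congr_fun measurableSet_Ioi
    intro ψ hψ
    have hψ0 : 0 ≤ ψ := le_trans ha (le_of_lt hψ)
    simp only [halfGaussianPDF, if_pos hψ0]
    have harg : -ψ ^ 2 / (π * r ^ 2) = -b * ψ ^ 2 := by
      rw [hbdef]; field_simp
    rw [harg]; ring
  -- step 2: linearity
  have hlin : ∫ ψ in Ioi a, ((2 / (π * r)) * (ψ ^ 2 * Real.exp (-b * ψ ^ 2))
          - (2 / (π * r) * (2 * a)) * (ψ * Real.exp (-b * ψ ^ 2))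
          + (2 / (π * r) * a ^ 2) * Real.exp (-b * ψ ^ 2))
      = (2 / (π * r)) * (∫ ψ in Ioi a, ψ ^ 2 * Real.exp (-b * ψ ^ 2))
          - (2 / (π * r) * (2 * a)) * (∫ ψ in Ioi a, ψ * Real.exp (-b * ψ ^ 2))
          + (2 / (π * r) * a ^ 2) * J0 := by
    have hiA : IntegrableOn (fun ψ : ℝ => (2 / (π * r)) * (ψ ^ 2 * Real.exp (-b * ψ ^ 2))
        - (2 / (π * r) * (2 * a)) * (ψ * Real.exp (-b * ψ ^ 2))) (Ioi a) volume :=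
      (((gInt2 hb).const_mul _).sub ((gInt1 hb).const_mul _)).integrableOn
    have hiC : IntegrableOn (fun ψ : ℝ => (2 / (π * r) * a ^ 2) * Real.exp (-b * ψ ^ 2))
        (Ioi a) volume := ((gInt0 hb).const_mul _).integrableOn
    rw [integral_add hiA hiC,
        integral_sub ((gInt2 hb).const_mul _).integrableOn ((gInt1 hb).const_mul _).integrableOn,
        integral_const_mul, integral_const_mul, integral_const_mul]
  -- step 3: evaluate the three integrals
  have h1 : ∫ ψ in Ioi a, ψ * Real.exp (-b * ψ ^ 2) = E / (2 * b) := gauss_I1 hb a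
  have h2 : ∫ ψ in Ioi a, ψ ^ 2 * Real.exp (-b * ψ ^ 2) = a * E / (2 * b) + J0 / (2 * b) :=
    gauss_I2 hb a
  have h0 : J0 = π * r / 2 - Real.sqrt π * r * T := by
    rw [hJ0, gauss_I0 hb ha]
    have hsq : Real.sqrt (π / b) = π * r := by
      rw [hbdef, show π / (π * r ^ 2)⁻¹ = (π * r) ^ 2 by field_simp,
        Real.sqrt_sq (by positivity)]
    have hcov : ∫ x in (0:ℝ)..a, Real.exp (-b * x ^ 2) = Real.sqrt π * r * T := by
      rw [hadef, hT]
      simpa [hbdef] using cov_lemma r c_e hr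
    rw [hsq, hcov]
  -- step 4: exponent and erf rewrites
  have hEe : Real.exp (-c_e ^ 2 / π) = E := by
    rw [hE]; congr 1; rw [hbdef, hadef]; field_simp
  have herf : erf (c_e / Real.sqrt π) = 2 / Real.sqrt π * T := by rw [erf, hT]
  -- assemble
  rw [Evar, show c_e * r = a from rfl, hcong, hlin, h1, h2, h0, hEe, herf, hadef]
  have hs : Real.sqrt π ^ 2 = π := Real.sq_sqrt hπ.le
  have hs0 : (0:ℝ) < Real.sqrt π := Real.sqrt_pos.mpr hπ
  rw [hbdef, ← hs]
  field_simp
  ring_nf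
  rw [hs]
  linear_combination (-2 * π * T - 4 * c_e ^ 2 * T + 2 * T * (Real.sqrt π ^ 2 + π)) * hs
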